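/- Let G be a finite solvable group all of whose subgroups are indecomposable, and suppose G is not a p-group (its order is not a prime power). Then the Sylow 2-subgroups of G are cyclic. -/

import Mathlib

universe u

/-- A group is *indecomposable* if whenever it is isomorphic to a direct
product `A × B` of groups, one of `A` or `B` is trivial. -/
def Indecomposable (G : Type u) [Group G] : Prop :=
  ∀ (A B : Type u) [Group A] [Group B], Nonempty (G ≃* A × B) →
    Subsingleton A ∨ Subsingleton B

/-- Multiplicative version of `Equiv.piSplitAt`. -/
def MyAux.mulPiSplitAt {ι : Type} [DecidableEq ι] (i : ι) (F : ι → Type)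
    [∀ j, Group (F j)] :
    ((j : ι) → F j) ≃* F i × ((j : {j : ι // j ≠ i}) → F j) :=
  { Equiv.piSplitAt i F with map_mul' := fun _ _ => rfl }

/-- `MulAut` of `Multiplicative A` is `AddAut A`. -/
def MyAux.mulAutMultiplicative (A : Type) [AddGroup A] :
    MulAut (Multiplicative A) ≃* Multiplicative (AddAut A) :=
  MulAutMultiplicative A

lemma MyAux.isCyclic_zpowers {G : Type*} [Group G] (g : G) :
    IsCyclic (Subgroup.zpowers g) := by
  refine ⟨⟨⟨g, Subgroup.mem_zpowers g⟩, fun x => ?_⟩⟩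
  obtain ⟨n, hn⟩ := Subgroup.mem_zpowers_iff.mp x.2
  exact ⟨n, Subtype.ext (by simpa using hn)⟩

/-- No element has order `a * b` with `a, b` coprime and both `> 1`. -/
lemma MyAux.no_coprime_order {G : Type} [Group G]
    (hind : ∀ H : Subgroup G, Indecomposable H)
    {g : G} {a b : ℕ} (ha : 1 < a) (hb : 1 < b) (hab : a.Coprime b)
    (horder : orderOf g = a * b) : False := by
  haveI : IsCyclic (Subgroup.zpowers g) := MyAux.isCyclic_zpowers g
  have h1 : Nat.card (Subgroup.zpowers g) = a * b := by
    rw [Nat.card_zpowers, horder]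
  have e2 : ZMod (Nat.card (Subgroup.zpowers g)) ≃+ ZMod a × ZMod b := by
    rw [h1]; exact (ZMod.chineseRemainder hab).toAddEquiv
  have e : (Subgroup.zpowers g) ≃* Multiplicative (ZMod a) × Multiplicative (ZMod b) :=
    ((zmodCyclicMulEquiv inferInstance).symm.trans
      (AddEquiv.toMultiplicative e2)).trans (MulEquiv.prodMultiplicative _ _)
  haveI : Fact (1 < a) := ⟨ha⟩
  haveI : Fact (1 < b) := ⟨hb⟩
  rcases hind (Subgroup.zpowers g) _ _ ⟨e⟩ with hs | hs
  · exact (not_subsingleton _) hs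
  · exact (not_subsingleton _) hs

/-- A finite indecomposable commutative group is cyclic. -/
lemma MyAux.indecomposable_comm_isCyclic (H : Type) [CommGroup H] [Finite H]
    (h : Indecomposable H) : IsCyclic H := by
  classical
  obtain ⟨ι, hι, n, h1, ⟨e⟩⟩ := CommGroup.equiv_prod_multiplicative_zmod_of_finite H
  cases isEmpty_or_nonempty ι with
  | inl hempty =>
    haveI : Subsingleton H := e.toEquiv.subsingleton
    infer_instance
  | inr hne =>
    obtain ⟨i₀⟩ := hne
    have e2 := e.trans (MyAux.mulPiSplitAt i₀ fun i => Multiplicative (ZMod (n i)))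
    haveI : Fact (1 < n i₀) := ⟨h1 i₀⟩
    rcases h _ _ ⟨e2⟩ with hs | hs
    · exact absurd hs (not_subsingleton _)
    · haveI := hs
      letI : Unique ((j : {j : ι // j ≠ i₀}) → Multiplicative (ZMod (n j))) :=
        ⟨⟨1⟩, fun a => Subsingleton.elim a _⟩
      have e3 : H ≃* Multiplicative (ZMod (n i₀)) := e2.trans (MulEquiv.prodUnique)
      exact isCyclic_of_surjective e3.symm e3.symm.surjective

lemma MyAux.no_comm_two_odd {G : Type} [Group G] (hind : ∀ H : Subgroup G, Indecomposable H)
    {z x : G} {r : ℕ} (hr : r.Prime) (hr2 : r ≠ 2) (hc : Commute z x)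
    (hz : orderOf z = 2) (hx : orderOf x = r) : False := by
  have hco : (orderOf z).Coprime (orderOf x) := by
    rw [hz, hx]; exact (Nat.coprime_primes Nat.prime_two hr).mpr (Ne.symm hr2)
  have horder := hc.orderOf_mul_eq_mul_orderOf_of_coprime hco
  rw [hz, hx] at horder hco
  exact MyAux.no_coprime_order hind (by norm_num) hr.one_lt hco horder

/-- If `G` is a finite solvable group all of whose subgroups are
indecomposable and `G` is not a `p`-group, then the Sylow `2`-subgroups of
`G` are cyclic. -/
theorem stmt_15 (G : Type) [Group G] [Fintype G] [Group.IsSolvable G]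
    (hind : ∀ H : Subgroup G, Indecomposable H)
    (hnp : ¬ ∃ p : ℕ, p.Prime ∧ IsPGroup p G)
    (P : Sylow 2 G) : IsCyclic (P : Subgroup G) := by
  classical
  haveI : Fact (Nat.Prime 2) := ⟨Nat.prime_two⟩
  by_cases h2 : 2 ∣ Fintype.card G
  case neg =>
    have hcard : Nat.card (P : Subgroup G) = 2 ^ (Nat.card G).factorization 2 :=
      P.card_eq_multiplicity
    have h0 : (Nat.card G).factorization 2 = 0 := by
      rw [Nat.factorization_eq_zero_iff]
      right; left
      rwa [Nat.card_eq_fintype_card]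
    rw [h0, pow_zero] at hcard
    haveI : Subsingleton (P : Subgroup G) := (Nat.card_eq_one_iff_unique.mp hcard).1
    infer_instance
  case pos =>
    haveI hGnt : Nontrivial G :=
      Fintype.one_lt_card_iff_nontrivial.mp (Nat.le_of_dvd Fintype.card_pos h2)
    have hsolv : ∃ n, derivedSeries G n = ⊥ := Group.IsSolvable.solvable
    have hk₀ : derivedSeries G (Nat.find hsolv) = ⊥ := Nat.find_spec hsolv
    have hk₀ne : Nat.find hsolv ≠ 0 := by
      intro h0
      rw [h0, derivedSeries_zero] at hk₀
      exact top_ne_bot hk₀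
    set N : Subgroup G := derivedSeries G (Nat.find hsolv - 1) with hNdef
    have hNbot : N ≠ ⊥ :=
      Nat.find_min hsolv (Nat.sub_lt (Nat.pos_of_ne_zero hk₀ne) one_pos)
    haveI hNnormal : N.Normal := derivedSeries_normal G _
    have hNcommutator : ⁅N, N⁆ = ⊥ := by
      have hs := derivedSeries_succ G (Nat.find hsolv - 1)
      rw [Nat.sub_add_cancel (Nat.one_le_iff_ne_zero.mpr hk₀ne), hk₀] at hs
      exact hs.symm
    haveI hNcomm : IsMulCommutative N :=
      Subgroup.le_centralizer_iff_isMulCommutative.mp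
        (Subgroup.commutator_eq_bot_iff_le_centralizer.mp hNcommutator)
    letI : CommGroup N := { N.toGroup with mul_comm := mul_comm' }
    haveI hNcyc : IsCyclic N := MyAux.indecomposable_comm_isCyclic N (hind N)
    haveI hNnt : Nontrivial N := (Subgroup.nontrivial_iff_ne_bot N).mpr hNbot
    have hcardN : 1 < Nat.card N := Finite.one_lt_card
    set q := (Nat.card N).minFac with hqdef
    have hq : q.Prime := Nat.minFac_prime (by omega)
    haveI : Fact q.Prime := ⟨hq⟩
    have hqdvd : q ∣ Nat.card N := Nat.minFac_dvd _
    have hcomm' : ∀ x y : G, x ∈ N → y ∈ N → x * y = y * x := by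
      intro x y hx hy
      exact congrArg Subtype.val (mul_comm (⟨x, hx⟩ : N) (⟨y, hy⟩ : N))
    set M : Subgroup G :=
      { carrier := {x | x ∈ N ∧ x ^ q = 1}
        one_mem' := ⟨N.one_mem, one_pow q⟩
        mul_mem' := fun {x y} hx hy => ⟨N.mul_mem hx.1 hy.1, by
          have hc : Commute x y := hcomm' x y hx.1 hy.1
          rw [hc.mul_pow, hx.2, hy.2, one_mul]⟩
        inv_mem' := fun {x} hx => ⟨N.inv_mem hx.1, by rw [inv_pow, hx.2, inv_one]⟩ }
      with hMdef
    haveI hMnormal : M.Normal := by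
      constructor
      intro x hx g
      exact ⟨hNnormal.conj_mem x hx.1 g, by rw [conj_pow, hx.2, mul_one, mul_inv_cancel]⟩
    have hMN : M ≤ N := fun x hx => hx.1
    haveI : Fintype N := Fintype.ofFinite _
    obtain ⟨y, hy⟩ := exists_prime_orderOf_dvd_card (G := N) q
      (by rwa [← Nat.card_eq_fintype_card])
    have hyM : (y : G) ∈ M := by
      refine ⟨y.2, ?_⟩
      have h' : (y : G) ^ q = ((y ^ q : N) : G) := rfl
      rw [h', ← hy, pow_orderOf_eq_one y, Subgroup.coe_one]
    have hyne : y ≠ 1 := by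
      intro h; rw [h, orderOf_one] at hy; exact hq.one_lt.ne hy
    have hy1 : (y : G) ≠ 1 := fun h => hyne (Subtype.ext h)
    haveI hMnt : Nontrivial M :=
      nontrivial_of_ne (⟨(y : G), hyM⟩ : M) 1 (fun h => hy1 (congrArg Subtype.val h))
    haveI hMcyc : IsCyclic M := Subgroup.isCyclic_of_le hMN
    have hordM : ∀ w : M, w ≠ 1 → orderOf (w : G) = q := by
      intro w hw
      have hdvd : orderOf (w : G) ∣ q := orderOf_dvd_of_pow_eq_one w.2.2
      rcases hq.eq_one_or_self_of_dvd _ hdvd with h1 | h1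
      · exact absurd (Subtype.ext (orderOf_eq_one_iff.mp h1)) hw
      · exact h1
    haveI : Fintype M := Fintype.ofFinite _
    have hcardM : Nat.card M = q := by
      obtain ⟨g₀, hg₀⟩ := hMcyc.exists_generator
      have h1 : Nat.card M = orderOf g₀ :=
        (orderOf_eq_card_of_forall_mem_zpowers hg₀).symm
      have hg₀ne : g₀ ≠ 1 := by
        intro h
        rw [h] at hg₀
        have hsub : Subsingleton M := by
          constructor
          intro a b
          have ha := hg₀ a
          have hb := hg₀ b
          rw [Subgroup.zpowers_one_eq_bot, Subgroup.mem_bot] at ha hb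
          rw [ha, hb]
        exact not_subsingleton M hsub
      rw [h1, ← Subgroup.orderOf_coe, hordM g₀ hg₀ne]
    by_cases hq2 : q = 2
    · -- q = 2 : M = {1, z} with z central of order 2; contradiction
      exfalso
      obtain ⟨z, hz1⟩ := exists_ne (1 : M)
      have hzord : orderOf (z : G) = 2 := hq2 ▸ hordM z hz1
      have huniq : ∀ w : M, w ≠ 1 → w = z := by
        intro w hw
        by_contra hne
        have h3 : ({1, w, z} : Finset M).card = 3 := by
          rw [Finset.card_insert_of_notMem (by simp [Ne.symm hw, Ne.symm hz1]),
            Finset.card_insert_of_notMem (by simpa using hne), Finset.card_singleton]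
        have hle : ({1, w, z} : Finset M).card ≤ Fintype.card M :=
          Finset.card_le_card (Finset.subset_univ _)
        rw [h3] at hle
        rw [Nat.card_eq_fintype_card] at hcardM
        omega
      have hz1' : (z : G) ≠ 1 := fun h => hz1 (Subtype.ext h)
      have hzcentral : ∀ g : G, Commute g (z : G) := by
        intro g
        have hmem : g * (z : G) * g⁻¹ ∈ M := hMnormal.conj_mem _ z.2 g
        have hne : (⟨g * (z : G) * g⁻¹, hmem⟩ : M) ≠ 1 := by
          intro h
          have hc : g * (z : G) * g⁻¹ = 1 := congrArg Subtype.val h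
          apply hz1'
          have hzz : (z : G) = g⁻¹ * (g * (z : G) * g⁻¹) * g := by group
          rw [hzz, hc, mul_one, inv_mul_cancel]
        have heq : g * (z : G) * g⁻¹ = (z : G) := congrArg Subtype.val (huniq _ hne)
        have : g * (z : G) = (z : G) * g := by
          calc g * (z:G) = g * (z:G) * g⁻¹ * g := by group
            _ = (z:G) * g := by rw [heq]
        exact this
      obtain ⟨r, hrp, hr2, hrdvd⟩ : ∃ r, r.Prime ∧ r ≠ 2 ∧ r ∣ Fintype.card G := by
        by_contra hcon
        push_neg at hcon
        apply hnp
        refine ⟨2, Nat.prime_two,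
          IsPGroup.iff_card.mpr ⟨(Nat.card G).primeFactorsList.length, ?_⟩⟩
        apply Nat.eq_prime_pow_of_unique_prime_dvd Nat.card_pos.ne'
        intro d hd hdvd
        by_contra hd2
        rw [Nat.card_eq_fintype_card] at hdvd
        exact hcon d hd hd2 hdvd
      haveI : Fact r.Prime := ⟨hrp⟩
      obtain ⟨x, hx⟩ := exists_prime_orderOf_dvd_card (G := G) r hrdvd
      exact MyAux.no_comm_two_odd hind hrp hr2 ((hzcentral x).symm) hzord hx
    · -- q odd : conjugation embeds P into the cyclic group MulAut M
      have hψinj : Function.Injective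
          ((MulAut.conjNormal (H := M)).comp (P : Subgroup G).subtype) := by
        set ψ := (MulAut.conjNormal (H := M)).comp (P : Subgroup G).subtype with hψdef
        rw [← MonoidHom.ker_eq_bot_iff, Subgroup.eq_bot_iff_forall]
        intro g hg
        by_contra hg1
        obtain ⟨k, hk⟩ := P.isPGroup' g
        obtain ⟨j, -, hj⟩ := (Nat.dvd_prime_pow Nat.prime_two).mp
          (orderOf_dvd_of_pow_eq_one hk)
        have hjne : j ≠ 0 := by
          intro h0; rw [h0, pow_zero] at hj
          exact hg1 (orderOf_eq_one_iff.mp hj)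
        have hg'ord : orderOf (g ^ (2 ^ (j - 1))) = 2 := by
          rw [orderOf_pow, hj, Nat.gcd_eq_right (pow_dvd_pow 2 (Nat.sub_le j 1)),
            Nat.pow_div (Nat.sub_le j 1) (by norm_num),
            Nat.sub_sub_self (Nat.one_le_iff_ne_zero.mpr hjne), pow_one]
        have hgM : ∀ m : M, Commute ((g : G)) (m : G) := by
          intro m
          have h1 : ψ g m = m := by rw [MonoidHom.mem_ker.mp hg]; rfl
          have hc2 : (g : G) * (m : G) * (g : G)⁻¹ = (m : G) := by
            have := congrArg Subtype.val h1
            simpa [hψdef] using this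
          have : (g:G) * (m:G) = (m:G) * (g:G) := by
            calc (g:G)*(m:G) = (g:G)*(m:G)*(g:G)⁻¹*(g:G) := by group
              _ = (m:G)*(g:G) := by rw [hc2]
          exact this
        obtain ⟨w, hw1⟩ := exists_ne (1 : M)
        have hword : orderOf (w : G) = q := hordM w hw1
        have hcomm : Commute ((g : G) ^ (2 ^ (j - 1))) (w : G) := (hgM w).pow_left _
        have hordcoe : orderOf ((g : G) ^ (2 ^ (j-1))) = 2 := by
          have hcoe : ((g ^ (2 ^ (j-1)) : (P : Subgroup G)) : G) = (g : G) ^ (2 ^ (j-1)) := rfl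
          rw [← hcoe, Subgroup.orderOf_coe]
          exact hg'ord
        exact MyAux.no_comm_two_odd hind hq hq2 hcomm hordcoe hword
      haveI : Fact (Nat.card M).Prime := by rw [hcardM]; exact ⟨hq⟩
      have eM : MulAut M ≃* (ZMod (Nat.card M))ˣ :=
        ((MulAut.congr (zmodCyclicMulEquiv hMcyc)).symm.trans
          (MyAux.mulAutMultiplicative (ZMod (Nat.card M)))).trans (ZMod.AddAutEquivUnits _).toMultiplicative
      haveI : IsCyclic (MulAut M) :=
        isCyclic_of_surjective eM.symm eM.symm.surjective
      have e := (MonoidHom.ofInjective hψinj).symm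
      exact isCyclic_of_surjective e e.surjective
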